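/- Let n ≥ 2, let H_1, …, H_p be Hermitian U(1)-invariant complex matrices each of which is 2-local (a finite sum of matrices each supported on some subset of Fin n of size at most 2), and set V := Matrix.exp(-i·H_1)·…·Matrix.exp(-i·H_p). Then Δ3(V) ≡ 0 (mod 2π). -/

import Mathlib

open Finset Matrix

noncomputable section

/-- Hamming weight of a basis label. -/
def hw {n : ℕ} (z : Fin n → Bool) : ℕ := (Finset.univ.filter fun i => z i = true).card

/-- A matrix is U(1)-invariant if it vanishes off the Hamming-weight blocks. -/
def U1Invariant {n : ℕ} (M : Matrix (Fin n → Bool) (Fin n → Bool) ℂ) : Prop :=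
  ∀ z z', hw z ≠ hw z' → M z z' = 0

/-- The weight-`m` block `M_m` of a matrix `M`. -/
def block {n : ℕ} (M : Matrix (Fin n → Bool) (Fin n → Bool) ℂ) (m : ℕ) :
    Matrix {z : Fin n → Bool // hw z = m} {z : Fin n → Bool // hw z = m} ℂ :=
  fun a b => M a.1 b.1

/-- The phase `θ_m(V) = arg det(V_m)`. -/
def theta {n : ℕ} (V : Matrix (Fin n → Bool) (Fin n → Bool) ℂ) (m : ℕ) : ℝ :=
  Complex.arg (Matrix.det (block V m))

/-- The phase `Δ3(V) = θ_{n-1} - θ_1 - (n-2)(θ_n - θ_0)`. -/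
def Delta3 {n : ℕ} (V : Matrix (Fin n → Bool) (Fin n → Bool) ℂ) : ℝ :=
  theta V (n-1) - theta V 1 - ((n : ℝ) - 2) * (theta V n - theta V 0)

/-- `x ≡ y (mod 2π)`. -/
def Mod2Pi (x y : ℝ) : Prop := ∃ j : ℤ, x - y = 2 * Real.pi * j

/-- A matrix `M` is supported on `S ⊆ Fin n` if it acts only on the qubits in `S`. -/
def SupportedOn {n : ℕ} (S : Finset (Fin n)) (M : Matrix (Fin n → Bool) (Fin n → Bool) ℂ) : Prop :=
  ∃ f : ({ i // i ∈ S } → Bool) → ({ i // i ∈ S } → Bool) → ℂ,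
    ∀ z z' : Fin n → Bool,
      M z z' = if ∀ i ∉ S, z i = z' i then f (fun i => z i.1) (fun i => z' i.1) else 0

/-- A matrix is `k`-local if it is a finite sum of matrices each supported on a
subset of size at most `k`. -/
def KLocal {n : ℕ} (k : ℕ) (M : Matrix (Fin n → Bool) (Fin n → Bool) ℂ) : Prop :=
  ∃ (p : ℕ) (g : Fin p → Matrix (Fin n → Bool) (Fin n → Bool) ℂ) (S : Fin p → Finset (Fin n)),
    (∀ i, (S i).card ≤ k ∧ SupportedOn (S i) (g i)) ∧ M = ∑ i, g i

section Aux

variable {n : ℕ}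

lemma hw_le (z : Fin n → Bool) : hw z ≤ n := by
  simpa [hw] using Finset.card_filter_le Finset.univ fun i => z i = true

lemma hw_eq_zero_iff (z : Fin n → Bool) : hw z = 0 ↔ z = fun _ => false := by
  constructor
  · intro h
    have h0 : (Finset.univ.filter fun i => z i = true) = ∅ := Finset.card_eq_zero.mp h
    funext i
    have hi : i ∉ (Finset.univ.filter fun i => z i = true) := by
      rw [h0]; exact Finset.notMem_empty i
    simpa using hi
  · rintro rfl; simp [hw]

lemma hw_eq_top_iff (z : Fin n → Bool) : hw z = n ↔ z = fun _ => true := by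
  constructor
  · intro h
    have hu : (Finset.univ.filter fun i => z i = true) = Finset.univ :=
      Finset.eq_univ_of_card _ (by simpa [hw] using h)
    funext i
    have := Finset.eq_univ_iff_forall.mp hu i
    simpa using this
  · rintro rfl; simp [hw]

def dT (i : Fin n) : Fin n → Bool := fun k => decide (k = i)

def dF (i : Fin n) : Fin n → Bool := fun k => !decide (k = i)

lemma hw_dT (i : Fin n) : hw (dT i) = 1 := by
  have h : (Finset.univ.filter fun k => dT i k = true) = {i} := by
    ext k; simp [dT]
  simp [hw, h]

lemma hw_dF (i : Fin n) : hw (dF i) = n - 1 := by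
  have h : (Finset.univ.filter fun k => dF i k = true) = Finset.univ.erase i := by
    ext k; simp [dF]
  rw [hw, h, Finset.card_erase_of_mem (Finset.mem_univ i)]
  simp

lemma filter_hw_zero : (Finset.univ.filter fun z : Fin n → Bool => hw z = 0)
    = {fun _ => false} := by
  ext z; simp [hw_eq_zero_iff]

lemma filter_hw_top : (Finset.univ.filter fun z : Fin n → Bool => hw z = n)
    = {fun _ => true} := by
  ext z; simp [hw_eq_top_iff]

lemma sum_hw_one (F : (Fin n → Bool) → ℂ) :
    ∑ z ∈ Finset.univ.filter (fun z => hw z = 1), F z = ∑ i : Fin n, F (dT i) := by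
  refine (Finset.sum_bij (fun (i : Fin n) _ => dT i) ?_ ?_ ?_ ?_).symm
  · intro i _; simp [Finset.mem_filter, hw_dT]
  · intro i _ j _ hij
    have := congrFun hij i
    simpa [dT] using this
  · intro z hz
    rw [Finset.mem_filter] at hz
    obtain ⟨i, hi⟩ := Finset.card_eq_one.mp hz.2
    have hmem : ∀ k, z k = true ↔ k = i := by
      intro k
      constructor
      · intro h
        have hk : k ∈ Finset.univ.filter fun i => z i = true := by simp [h]
        rw [hi] at hk; simpa using hk
      · rintro rfl
        have hk : k ∈ Finset.univ.filter fun i => z i = true := by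
          rw [hi]; exact Finset.mem_singleton_self k
        simpa using hk
    refine ⟨i, Finset.mem_univ i, ?_⟩
    funext k
    by_cases hk : k = i
    · subst hk; simp [dT, (hmem k).mpr rfl]
    · have hzk : z k ≠ true := fun h => hk ((hmem k).mp h)
      simp only [Bool.not_eq_true] at hzk
      simp [dT, hk, hzk]
  · intro i _; rfl

lemma sum_hw_pred (hn : 1 ≤ n) (F : (Fin n → Bool) → ℂ) :
    ∑ z ∈ Finset.univ.filter (fun z => hw z = n - 1), F z = ∑ i : Fin n, F (dF i) := by
  refine (Finset.sum_bij (fun (i : Fin n) _ => dF i) ?_ ?_ ?_ ?_).symm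
  · intro i _; simp [Finset.mem_filter, hw_dF]
  · intro i _ j _ hij
    have := congrFun hij i
    simpa [dF] using this
  · intro z hz
    rw [Finset.mem_filter] at hz
    have hadd := Finset.card_filter_add_card_filter_not
      (s := (Finset.univ : Finset (Fin n))) (p := fun i => z i = true)
    have hcard : (Finset.univ.filter fun i => ¬ z i = true).card = 1 := by
      have h1 : (Finset.univ.filter fun i => z i = true).card = n - 1 := hz.2
      have h2 : (Finset.univ : Finset (Fin n)).card = n := by simp
      omega
    obtain ⟨i, hi⟩ := Finset.card_eq_one.mp hcard
    have hmem : ∀ k, ¬ z k = true ↔ k = i := by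
      intro k
      constructor
      · intro h
        have hk : k ∈ Finset.univ.filter fun i => ¬ z i = true := by simp [h]
        rw [hi] at hk; simpa using hk
      · rintro rfl
        have hk : k ∈ Finset.univ.filter fun i => ¬ z i = true := by
          rw [hi]; exact Finset.mem_singleton_self k
        simpa using hk
    refine ⟨i, Finset.mem_univ i, ?_⟩
    funext k
    by_cases hk : k = i
    · subst hk
      have hzk : ¬ z k = true := (hmem k).mpr rfl
      simp only [Bool.not_eq_true] at hzk
      simp [dF, hzk]
    · have hzk : z k = true := by
        by_contra h
        exact hk ((hmem k).mp h)
      simp [dF, hk, hzk]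
  · intro i _; rfl

end Aux

section Aux2b
variable {n : ℕ}

lemma trace_block_eq_sum (g : Matrix (Fin n → Bool) (Fin n → Bool) ℂ) (m : ℕ) :
    (block g m).trace = ∑ z ∈ Finset.univ.filter fun z => hw z = m, g z z := by
  exact (Finset.sum_subtype (p := fun z : Fin n → Bool => hw z = m)
    (Finset.univ.filter fun z => hw z = m) (fun x => by simp) (fun z => g z z)).symm

lemma supported_trace (hn : 2 ≤ n) (S : Finset (Fin n)) (hS : S.card ≤ 2)
    (g : Matrix (Fin n → Bool) (Fin n → Bool) ℂ) (hg : SupportedOn S g) :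
    (block g (n-1)).trace + ((n:ℂ) - 2) * (block g 0).trace
      = (block g 1).trace + ((n:ℂ) - 2) * (block g n).trace := by
  classical
  obtain ⟨f, hf⟩ := hg
  set φ : (Fin n → Bool) → ℂ := fun z => f (fun i => z i.1) (fun i => z i.1) with hφ
  have hres : ∀ z w : Fin n → Bool, (∀ k ∈ S, z k = w k) → φ z = φ w := by
    intro z w h
    have : (fun i : {i // i ∈ S} => z i.1) = fun i : {i // i ∈ S} => w i.1 :=
      funext fun k => h k.1 k.2
    simp only [hφ, this]
  have hdiag : ∀ z, g z z = φ z := by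
    intro z; rw [hf]; simp [hφ]
  have h0 : (block g 0).trace = φ (fun _ => false) := by
    rw [trace_block_eq_sum, filter_hw_zero, Finset.sum_singleton, hdiag]
  have htop : (block g n).trace = φ (fun _ => true) := by
    rw [trace_block_eq_sum, filter_hw_top, Finset.sum_singleton, hdiag]
  have h1 : (block g 1).trace = ∑ i : Fin n, φ (dT i) := by
    rw [trace_block_eq_sum, Finset.sum_congr rfl fun z _ => hdiag z, sum_hw_one]
  have hpred : (block g (n-1)).trace = ∑ i : Fin n, φ (dF i) := by
    rw [trace_block_eq_sum, Finset.sum_congr rfl fun z _ => hdiag z, sum_hw_pred (by omega)]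
  have hcomplT : ∀ i ∈ Sᶜ, φ (dT i) = φ (fun _ => false) := by
    intro i hi
    rw [Finset.mem_compl] at hi
    refine hres (dT i) (fun _ => false) fun k hk => ?_
    have : k ≠ i := fun e => hi (e ▸ hk)
    simp [dT, this]
  have hcomplF : ∀ i ∈ Sᶜ, φ (dF i) = φ (fun _ => true) := by
    intro i hi
    rw [Finset.mem_compl] at hi
    refine hres (dF i) (fun _ => true) fun k hk => ?_
    have : k ≠ i := fun e => hi (e ▸ hk)
    simp [dF, this]
  have hcardc : (Sᶜ : Finset (Fin n)).card = n - S.card := by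
    rw [Finset.card_compl]; simp
  have hsplitT : ∑ i : Fin n, φ (dT i)
      = (∑ i ∈ S, φ (dT i)) + ((n - S.card : ℕ) : ℂ) * φ (fun _ => false) := by
    rw [← Finset.sum_add_sum_compl S fun i => φ (dT i)]
    congr 1
    rw [Finset.sum_congr rfl hcomplT, Finset.sum_const, hcardc, nsmul_eq_mul]
  have hsplitF : ∑ i : Fin n, φ (dF i)
      = (∑ i ∈ S, φ (dF i)) + ((n - S.card : ℕ) : ℂ) * φ (fun _ => true) := by
    rw [← Finset.sum_add_sum_compl S fun i => φ (dF i)]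
    congr 1
    rw [Finset.sum_congr rfl hcomplF, Finset.sum_const, hcardc, nsmul_eq_mul]
  rw [h0, htop, h1, hpred, hsplitT, hsplitF]
  interval_cases hc : S.card
  · -- card = 0
    obtain rfl : S = ∅ := Finset.card_eq_zero.mp hc
    have hFT : φ (fun _ => true) = φ (fun _ => false) :=
      hres (fun _ => true) (fun _ => false) fun k hk => absurd hk (Finset.notMem_empty k)
    rw [Finset.sum_empty, Finset.sum_empty, hFT]
  · -- card = 1
    obtain ⟨i0, rfl⟩ := Finset.card_eq_one.mp hc
    have e1 : φ (dF i0) = φ (fun _ => false) := by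
      refine hres (dF i0) (fun _ => false) fun k hk => ?_
      rw [Finset.mem_singleton] at hk
      subst hk; simp [dF]
    have e2 : φ (dT i0) = φ (fun _ => true) := by
      refine hres (dT i0) (fun _ => true) fun k hk => ?_
      rw [Finset.mem_singleton] at hk
      subst hk; simp [dT]
    rw [Finset.sum_singleton, Finset.sum_singleton, e1, e2,
      Nat.cast_sub (by omega : 1 ≤ n), Nat.cast_one]
    ring
  · -- card = 2
    obtain ⟨i0, j0, hij, rfl⟩ := Finset.card_eq_two.mp hc
    have hji : j0 ≠ i0 := fun e => hij e.symm
    have e1 : φ (dF i0) = φ (dT j0) := by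
      refine hres (dF i0) (dT j0) fun k hk => ?_
      rw [Finset.mem_insert, Finset.mem_singleton] at hk
      rcases hk with rfl | rfl
      · simp [dF, dT, hij]
      · simp [dF, dT, hji]
    have e2 : φ (dF j0) = φ (dT i0) := by
      refine hres (dF j0) (dT i0) fun k hk => ?_
      rw [Finset.mem_insert, Finset.mem_singleton] at hk
      rcases hk with rfl | rfl
      · simp [dF, dT, hij]
      · simp [dF, dT, hji]
    rw [Finset.sum_pair hij, Finset.sum_pair hij, e1, e2,
      Nat.cast_sub (by omega : 2 ≤ n), Nat.cast_two]
    ring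

lemma klocal_trace (hn : 2 ≤ n) {M : Matrix (Fin n → Bool) (Fin n → Bool) ℂ}
    (h : KLocal 2 M) :
    (block M (n-1)).trace + ((n:ℂ) - 2) * (block M 0).trace
      = (block M 1).trace + ((n:ℂ) - 2) * (block M n).trace := by
  obtain ⟨q, g, S, hg, rfl⟩ := h
  have hblock : ∀ m : ℕ, block (∑ i, g i) m = ∑ i, block (g i) m := by
    intro m; ext a b; simp [block, Matrix.sum_apply]
  simp only [hblock, Matrix.trace_sum, Finset.mul_sum, ← Finset.sum_add_distrib]
  exact Finset.sum_congr rfl fun i _ => supported_trace hn (S i) (hg i).1 (g i) (hg i).2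

end Aux2b

section Aux3

variable {n : ℕ}

lemma U1_one : U1Invariant (1 : Matrix (Fin n → Bool) (Fin n → Bool) ℂ) :=
  fun z z' h => Matrix.one_apply_ne fun hz => h (by rw [hz])

lemma U1_mul {A B : Matrix (Fin n → Bool) (Fin n → Bool) ℂ}
    (hA : U1Invariant A) (hB : U1Invariant B) : U1Invariant (A * B) := by
  intro z z' h
  rw [Matrix.mul_apply]
  refine Finset.sum_eq_zero fun c _ => ?_
  by_cases hc : hw c = hw z
  · rw [hB c z' (by rw [hc]; exact h), mul_zero]
  · rw [hA z c (fun e => hc e.symm), zero_mul]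

lemma U1_smul (c : ℂ) {A : Matrix (Fin n → Bool) (Fin n → Bool) ℂ}
    (hA : U1Invariant A) : U1Invariant (c • A) := by
  intro z z' h
  show c * A z z' = 0
  rw [hA z z' h, mul_zero]

lemma block_one (m : ℕ) :
    block (1 : Matrix (Fin n → Bool) (Fin n → Bool) ℂ) m = 1 := by
  ext a b
  by_cases hab : a = b
  · subst hab
    simp [block, Matrix.one_apply_eq]
  · rw [Matrix.one_apply_ne hab]
    exact Matrix.one_apply_ne fun e => hab (Subtype.ext e)

lemma block_apply (M : Matrix (Fin n → Bool) (Fin n → Bool) ℂ) (m : ℕ)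
    (a b : {z : Fin n → Bool // hw z = m}) : block M m a b = M a.1 b.1 := rfl

lemma block_mul {A : Matrix (Fin n → Bool) (Fin n → Bool) ℂ} (hA : U1Invariant A)
    (B : Matrix (Fin n → Bool) (Fin n → Bool) ℂ) (m : ℕ) :
    block (A * B) m = block A m * block B m := by
  ext a b
  show (A * B) a.1 b.1 = _
  rw [Matrix.mul_apply, Matrix.mul_apply]
  simp only [block_apply]
  rw [← Finset.sum_subtype (p := fun z : Fin n → Bool => hw z = m)
    (Finset.univ.filter fun z => hw z = m) (fun x => by simp)
    (fun z => A a.1 z * B z b.1)]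
  refine (Finset.sum_subset (Finset.filter_subset _ _) fun x _ hx => ?_).symm
  rw [Finset.mem_filter] at hx
  have hx' : hw x ≠ m := fun e => hx ⟨Finset.mem_univ x, e⟩
  rw [hA a.1 x (by rw [a.2]; exact fun e => hx' e.symm), zero_mul]

lemma blocks_list (m : ℕ) (L : List (Matrix (Fin n → Bool) (Fin n → Bool) ℂ))
    (hmem : ∀ A ∈ L, U1Invariant A) :
    U1Invariant L.prod ∧ block L.prod m = (L.map fun A => block A m).prod := by
  induction L with
  | nil => exact ⟨U1_one, by simpa using block_one m⟩
  | cons A L ih =>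
    have hA := hmem A (by simp)
    have hL := ih fun B hB => hmem B (by simp [hB])
    constructor
    · rw [List.prod_cons]; exact U1_mul hA hL.1
    · rw [List.prod_cons, List.map_cons, List.prod_cons, block_mul hA, hL.2]

def wEquiv (n : ℕ) : (Fin n → Bool) ≃ (Σ m : Fin (n+1), {z : Fin n → Bool // hw z = (m : ℕ)}) where
  toFun z := ⟨⟨hw z, Nat.lt_succ_of_le (hw_le z)⟩, ⟨z, rfl⟩⟩
  invFun x := x.2.1
  left_inv z := rfl
  right_inv := by
    rintro ⟨⟨m, hm⟩, z, hz⟩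
    dsimp at hz ⊢
    subst hz
    rfl

lemma wEquiv_eq (z : Fin n → Bool) {m : ℕ} (hz : hw z = m) (hm : m < n + 1) :
    wEquiv n z = ⟨⟨m, hm⟩, ⟨z, hz⟩⟩ := by
  subst hz
  rfl

lemma exp_entry {A : Matrix (Fin n → Bool) (Fin n → Bool) ℂ} (hA : U1Invariant A)
    (z z' : Fin n → Bool) :
    NormedSpace.exp A z z' =
      Matrix.blockDiagonal' (fun m : Fin (n+1) => NormedSpace.exp (block A (m : ℕ)))
        (wEquiv n z) (wEquiv n z') := by
  classical
  have hcoe : ⇑(Matrix.reindexAlgEquiv ℂ ℂ (wEquiv n)) =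
      fun M : Matrix (Fin n → Bool) (Fin n → Bool) ℂ =>
        M.submatrix (wEquiv n).symm (wEquiv n).symm := by
    funext M
    rw [Matrix.reindexAlgEquiv_apply, Matrix.reindex_apply]
  have hcont : Continuous (Matrix.reindexAlgEquiv ℂ ℂ (wEquiv n)) := by
    rw [hcoe]
    refine continuous_pi fun x => continuous_pi fun y => ?_
    show Continuous fun M : Matrix (Fin n → Bool) (Fin n → Bool) ℂ =>
      M ((wEquiv n).symm x) ((wEquiv n).symm y)
    exact (continuous_apply _).comp (continuous_apply _)
  have hDiag : (Matrix.reindexAlgEquiv ℂ ℂ (wEquiv n)) A =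
      Matrix.blockDiagonal' (fun m : Fin (n+1) => block A (m : ℕ)) := by
    ext x y
    rcases x with ⟨mx, zx⟩
    rcases y with ⟨my, zy⟩
    rw [Matrix.reindexAlgEquiv_apply, Matrix.reindex_apply, Matrix.submatrix_apply]
    by_cases hxy : mx = my
    · subst hxy
      rw [Matrix.blockDiagonal'_apply_eq]
      rfl
    · rw [Matrix.blockDiagonal'_apply_ne _ _ _ hxy]
      exact hA _ _ (show hw zx.1 ≠ hw zy.1 by
        rw [zx.2, zy.2]; exact fun e => hxy (Fin.ext e))
  have hmap : (Matrix.reindexAlgEquiv ℂ ℂ (wEquiv n)) (NormedSpace.exp A)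
      = NormedSpace.exp ((Matrix.reindexAlgEquiv ℂ ℂ (wEquiv n)) A) := by
    letI : SeminormedRing (Matrix (Fin n → Bool) (Fin n → Bool) ℂ) :=
      Matrix.linftyOpSemiNormedRing
    letI : NormedRing (Matrix (Fin n → Bool) (Fin n → Bool) ℂ) := Matrix.linftyOpNormedRing
    letI : NormedAlgebra ℂ (Matrix (Fin n → Bool) (Fin n → Bool) ℂ) :=
      Matrix.linftyOpNormedAlgebra
    letI : NormedRing (Matrix (Σ m : Fin (n+1), {z : Fin n → Bool // hw z = (m : ℕ)})
        (Σ m : Fin (n+1), {z : Fin n → Bool // hw z = (m : ℕ)}) ℂ) := Matrix.linftyOpNormedRing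
    letI : NormedAlgebra ℂ (Matrix (Σ m : Fin (n+1), {z : Fin n → Bool // hw z = (m : ℕ)})
        (Σ m : Fin (n+1), {z : Fin n → Bool // hw z = (m : ℕ)}) ℂ) :=
      Matrix.linftyOpNormedAlgebra
    letI : NormedAlgebra ℚ (Matrix (Fin n → Bool) (Fin n → Bool) ℂ) :=
      Matrix.linftyOpNormedAlgebra
    exact NormedSpace.map_exp (Matrix.reindexAlgEquiv ℂ ℂ (wEquiv n)) hcont A
  rw [hDiag, Matrix.exp_blockDiagonal'] at hmap
  have hpi : NormedSpace.exp (fun m : Fin (n+1) => block A (m : ℕ)) =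
      fun m : Fin (n+1) => NormedSpace.exp (block A (m : ℕ)) := by
    letI : ∀ m : Fin (n+1), SeminormedRing
        (Matrix {z : Fin n → Bool // hw z = (m : ℕ)} {z : Fin n → Bool // hw z = (m : ℕ)} ℂ) :=
      fun m => Matrix.linftyOpSemiNormedRing
    letI : ∀ m : Fin (n+1), NormedRing
        (Matrix {z : Fin n → Bool // hw z = (m : ℕ)} {z : Fin n → Bool // hw z = (m : ℕ)} ℂ) :=
      fun m => Matrix.linftyOpNormedRing
    letI : ∀ m : Fin (n+1), NormedAlgebra ℂ
        (Matrix {z : Fin n → Bool // hw z = (m : ℕ)} {z : Fin n → Bool // hw z = (m : ℕ)} ℂ) :=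
      fun m => Matrix.linftyOpNormedAlgebra
    letI : ∀ m : Fin (n+1), NormedAlgebra ℚ
        (Matrix {z : Fin n → Bool // hw z = (m : ℕ)} {z : Fin n → Bool // hw z = (m : ℕ)} ℂ) :=
      fun m => Matrix.linftyOpNormedAlgebra
    exact Pi.exp_def _
  rw [hpi] at hmap
  have h2 := congrFun (congrFun (congrArg (fun M => M.submatrix (wEquiv n) (wEquiv n)) hmap) z) z'
  simp only [hcoe] at h2
  simpa [Matrix.submatrix_apply] using h2

lemma exp_u1 {A : Matrix (Fin n → Bool) (Fin n → Bool) ℂ} (hA : U1Invariant A) :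
    U1Invariant (NormedSpace.exp A) := by
  intro z z' h
  rw [exp_entry hA]
  exact Matrix.blockDiagonal'_apply_ne _ _ _ fun e => h (congrArg Fin.val e)

lemma block_exp {A : Matrix (Fin n → Bool) (Fin n → Bool) ℂ} (hA : U1Invariant A)
    {m : ℕ} (hm : m ≤ n) :
    block (NormedSpace.exp A) m = NormedSpace.exp (block A m) := by
  have hm' : m < n + 1 := by omega
  ext a b
  obtain ⟨za, ha⟩ := a
  obtain ⟨zb, hb⟩ := b
  show NormedSpace.exp A za zb = _
  rw [exp_entry hA, wEquiv_eq za ha hm', wEquiv_eq zb hb hm',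
    Matrix.blockDiagonal'_apply_eq]

end Aux3

section Aux4

variable {n : ℕ}

lemma block_hermitian {M : Matrix (Fin n → Bool) (Fin n → Bool) ℂ}
    (h : M.IsHermitian) (m : ℕ) : (block M m).IsHermitian := by
  ext a b
  show star (block M m b a) = block M m a b
  exact h.apply a.1 b.1

lemma trace_block_real {M : Matrix (Fin n → Bool) (Fin n → Bool) ℂ}
    (h : M.IsHermitian) (m : ℕ) :
    (((block M m).trace.re : ℝ) : ℂ) = (block M m).trace := by
  apply Complex.conj_eq_iff_re.mp
  conv_rhs => rw [← (block_hermitian h m).eq]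
  rw [Matrix.trace_conjTranspose]
  rfl

lemma det_exp_smul {m' : Type*} [Fintype m'] [DecidableEq m'] (c : ℂ)
    (B : Matrix m' m' ℂ) (hB : B.IsHermitian) :
    (NormedSpace.exp (c • B)).det = Complex.exp (c * B.trace) := by
  classical
  have h1 : (hB.eigenvectorUnitary : Matrix m' m' ℂ) * star (hB.eigenvectorUnitary : Matrix m' m' ℂ) = 1 :=
    Matrix.mem_unitaryGroup_iff.mp hB.eigenvectorUnitary.2
  have h2 : star (hB.eigenvectorUnitary : Matrix m' m' ℂ) * (hB.eigenvectorUnitary : Matrix m' m' ℂ) = 1 :=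
    Matrix.mem_unitaryGroup_iff'.mp hB.eigenvectorUnitary.2
  set U : Matrix m' m' ℂ := (hB.eigenvectorUnitary : Matrix m' m' ℂ) with hU
  set v : m' → ℂ := RCLike.ofReal ∘ hB.eigenvalues with hv
  set u : (Matrix m' m' ℂ)ˣ := ⟨U, star U, h1, h2⟩ with hu
  have hspec : B = U * Matrix.diagonal v * star U := hB.spectral_theorem
  have htr : B.trace = ∑ i, v i := by
    conv_lhs => rw [hspec]
    rw [Matrix.trace_mul_cycle, h2, Matrix.one_mul, Matrix.trace_diagonal]
  have hrep : c • B = (u : Matrix m' m' ℂ) * Matrix.diagonal (c • v) * (↑u⁻¹ : Matrix m' m' ℂ) := by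
    have hcoe : (↑u⁻¹ : Matrix m' m' ℂ) = star U := rfl
    rw [hcoe, hspec, Matrix.diagonal_smul]
    show c • (U * Matrix.diagonal v * star U) = U * (c • Matrix.diagonal v) * star U
    rw [mul_smul_comm, smul_mul_assoc]
  rw [hrep, Matrix.exp_units_conj, Matrix.det_mul, Matrix.det_mul, mul_right_comm]
  have hdetu : (↑u : Matrix m' m' ℂ).det * (↑u⁻¹ : Matrix m' m' ℂ).det = 1 := by
    rw [← Matrix.det_mul, Units.mul_inv, Matrix.det_one]
  rw [hdetu, one_mul, Matrix.exp_diagonal, Matrix.det_diagonal]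
  have hentry : ∀ i, NormedSpace.exp (c • v) i = Complex.exp (c * v i) := by
    intro i
    rw [Pi.coe_exp, Pi.smul_apply, smul_eq_mul, ← Complex.exp_eq_exp_ℂ]
  rw [Finset.prod_congr rfl fun i _ => hentry i, ← Complex.exp_sum, htr, Finset.mul_sum]

lemma arg_exp_real (x : ℝ) :
    ∃ k : ℤ, Complex.arg (Complex.exp ((x : ℂ) * Complex.I)) = x + 2 * Real.pi * k := by
  set z := Complex.exp ((x : ℂ) * Complex.I) with hz
  have habs : ‖z‖ = 1 := Complex.norm_exp_ofReal_mul_I x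
  have h1 : Complex.exp ((z.arg : ℂ) * Complex.I) = Complex.exp ((x : ℂ) * Complex.I) := by
    have := Complex.norm_mul_exp_arg_mul_I z
    rwa [habs, Complex.ofReal_one, one_mul] at this
  have h2 : Complex.exp (((z.arg - x : ℝ) : ℂ) * Complex.I) = 1 := by
    rw [Complex.ofReal_sub, sub_mul, Complex.exp_sub, h1, div_self (Complex.exp_ne_zero _)]
  obtain ⟨k, hk⟩ := Complex.exp_eq_one_iff.mp h2
  refine ⟨k, ?_⟩
  have hC : ((z.arg - x : ℝ) : ℂ) = ((k : ℝ) * (2 * Real.pi) : ℝ) := by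
    apply mul_right_cancel₀ Complex.I_ne_zero
    rw [hk]
    push_cast
    ring
  have hR : z.arg - x = (k : ℝ) * (2 * Real.pi) := by exact_mod_cast hC
  linarith [hR]

end Aux4

lemma det_list_prod' {α : Type*} [Fintype α] [DecidableEq α] (L : List (Matrix α α ℂ)) :
    L.prod.det = (L.map Matrix.det).prod :=
  map_list_prod (Matrix.detMonoidHom) L


/-- for `V` a product of exponentials of Hermitian U(1)-invariant
2-local Hamiltonians, `Δ3(V) ≡ 0 (mod 2π)`. -/
theorem stmt18 (n : ℕ) (hn : 2 ≤ n) (p : ℕ)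
    (H : Fin p → Matrix (Fin n → Bool) (Fin n → Bool) ℂ)
    (hherm : ∀ j, (H j).IsHermitian) (hU1 : ∀ j, U1Invariant (H j))
    (h2loc : ∀ j, KLocal 2 (H j))
    (V : Matrix (Fin n → Bool) (Fin n → Bool) ℂ)
    (hV : V = (List.ofFn fun j => NormedSpace.exp ((-Complex.I) • H j)).prod) :
    Mod2Pi (Delta3 V) 0 := by
  classical
  set t : Fin p → ℕ → ℝ := fun j m => ((block (H j) m).trace.re : ℝ) with ht
  have htrace : ∀ j m, ((t j m : ℝ) : ℂ) = (block (H j) m).trace :=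
    fun j m => trace_block_real (hherm j) m
  set T : ℕ → ℝ := fun m => ∑ j, t j m with hT
  have hdet : ∀ m : ℕ, m ≤ n →
      (block V m).det = Complex.exp (((-(T m) : ℝ) : ℂ) * Complex.I) := by
    intro m hm
    have hmemu1 : ∀ A ∈ (List.ofFn fun j => NormedSpace.exp ((-Complex.I) • H j)),
        U1Invariant A := by
      intro A hA
      rw [List.mem_ofFn] at hA
      obtain ⟨j, rfl⟩ := hA
      exact exp_u1 (U1_smul _ (hU1 j))
    have hb := (blocks_list m _ hmemu1).2
    rw [hV, hb, det_list_prod', List.map_ofFn, List.map_ofFn, List.prod_ofFn]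
    have hstep : ∀ j : Fin p,
        ((block (NormedSpace.exp ((-Complex.I) • H j)) m)).det
          = Complex.exp (-Complex.I * ((t j m : ℝ) : ℂ)) := by
      intro j
      rw [block_exp (U1_smul _ (hU1 j)) hm]
      have hsm : block ((-Complex.I) • H j) m = (-Complex.I) • block (H j) m := rfl
      rw [hsm, det_exp_smul _ _ (block_hermitian (hherm j) m), htrace]
    calc (∏ j, ((block (NormedSpace.exp ((-Complex.I) • H j)) m)).det)
        = ∏ j, Complex.exp (-Complex.I * ((t j m : ℝ) : ℂ)) :=
          Finset.prod_congr rfl fun j _ => hstep j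
      _ = Complex.exp (∑ j, -Complex.I * ((t j m : ℝ) : ℂ)) := (Complex.exp_sum _ _).symm
      _ = Complex.exp (((-(T m) : ℝ) : ℂ) * Complex.I) := by
          congr 1
          rw [← Finset.mul_sum]
          simp only [hT]
          push_cast
          ring
  have htheta : ∀ m : ℕ, m ≤ n → ∃ k : ℤ, theta V m = -(T m) + 2 * Real.pi * k := by
    intro m hm
    have := arg_exp_real (-(T m))
    rw [theta, hdet m hm]
    exact this
  obtain ⟨k3, h3⟩ := htheta (n-1) (Nat.sub_le n 1)
  obtain ⟨k1, h1⟩ := htheta 1 (by omega)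
  obtain ⟨kn, hnn⟩ := htheta n le_rfl
  obtain ⟨k0, h0⟩ := htheta 0 (by omega)
  have hcomb : ∀ j, t j (n-1) + ((n:ℝ) - 2) * t j 0 = t j 1 + ((n:ℝ) - 2) * t j n := by
    intro j
    have hC := klocal_trace hn (h2loc j)
    rw [← htrace, ← htrace, ← htrace, ← htrace] at hC
    exact_mod_cast hC
  have hsum : T (n-1) + ((n:ℝ) - 2) * T 0 = T 1 + ((n:ℝ) - 2) * T n := by
    simp only [hT, Finset.mul_sum, ← Finset.sum_add_distrib]
    exact Finset.sum_congr rfl fun j _ => hcomb j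
  refine ⟨k3 - k1 - ((n:ℤ) - 2) * (kn - k0), ?_⟩
  rw [Delta3, h3, h1, hnn, h0, sub_zero]
  push_cast
  linear_combination -hsum
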